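/- Paillier decryption is correct for g = 1+n: with n = pq (p, q distinct primes, each not dividing the other's predecessor), λ = lcm(p-1, q-1), L(u) = (u-1)/n, and ciphertext c = (1+n)^m · r^n mod n² where gcd(r,n)=1 and 0 ≤ m < n, we have L(c^λ mod n²) · (L((1+n)^λ mod n²))⁻¹ ≡ m (mod n). -/

import Mathlib

lemma one_add_pow_modeq (n : ℤ) (k : ℕ) : (1 + n) ^ k ≡ 1 + (k : ℤ) * n [ZMOD n ^ 2] := by
  induction k with
  | zero => simp
  | succ k ih =>
    calc (1 + n) ^ (k + 1) = (1 + n) ^ k * (1 + n) := pow_succ _ _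
      _ ≡ (1 + (k : ℤ) * n) * (1 + n) [ZMOD n ^ 2] := ih.mul_right _
      _ = 1 + ((k : ℤ) + 1) * n + (k : ℤ) * n ^ 2 := by ring
      _ ≡ 1 + ((k : ℤ) + 1) * n + (k : ℤ) * 0 [ZMOD n ^ 2] :=
          ((Int.ModEq.refl _).add (((Int.modEq_zero_iff_dvd).mpr dvd_rfl).mul_left _))
      _ = 1 + ((k + 1 : ℕ) : ℤ) * n := by push_cast; ring

lemma L_extract (N : ℕ) (hN : (N : ℤ) ≠ 0) (x : ℤ) (a : ℕ)
    (h : x ≡ 1 + (a : ℤ) * N [ZMOD (N : ℤ) ^ 2]) :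
    (((x % (N : ℤ) ^ 2 - 1) / N : ℤ) : ZMod N) = (a : ZMod N) := by
  have h1 : x % (N : ℤ) ^ 2 ≡ 1 + (a : ℤ) * N [ZMOD (N : ℤ) ^ 2] :=
    (Int.emod_emod_of_dvd x dvd_rfl).trans h
  obtain ⟨s, hs⟩ := Int.ModEq.dvd h1
  have hx : x % (N : ℤ) ^ 2 - 1 = (N : ℤ) * ((a : ℤ) + (-s) * N) := by linear_combination -hs
  rw [hx, Int.mul_ediv_cancel_left _ hN]
  push_cast
  simp [ZMod.natCast_self]

lemma pow_modeq_one_sq (pp : ℕ) (hpp : pp.Prime) (r : ℤ) (hr : IsCoprime r (pp : ℤ))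
    (k : ℕ) (hk : pp * (pp - 1) ∣ k) : r ^ k ≡ 1 [ZMOD (pp : ℤ) ^ 2] := by
  obtain ⟨a, b, hab⟩ := hr.pow_right (n := 2)
  haveI : NeZero (pp ^ 2) := ⟨pow_ne_zero 2 hpp.ne_zero⟩
  have hu : IsUnit ((r : ZMod (pp ^ 2))) := by
    apply IsUnit.of_mul_eq_one ((a : ℤ) : ZMod (pp ^ 2))
    have h := congrArg (fun z : ℤ => (z : ZMod (pp ^ 2))) hab
    simp only [Int.cast_add, Int.cast_mul, Int.cast_one, Int.cast_pow, Int.cast_natCast] at h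
    rw [show ((pp : ZMod (pp ^ 2))) ^ 2 = ((pp ^ 2 : ℕ) : ZMod (pp ^ 2)) by push_cast; ring,
      ZMod.natCast_self, mul_zero, add_zero] at h
    rw [mul_comm]; exact h
  obtain ⟨u, hu'⟩ := hu
  have htot : u ^ (pp * (pp - 1)) = 1 := by
    have h := ZMod.pow_totient u
    rwa [Nat.totient_prime_pow hpp (by norm_num : 0 < 2), pow_one] at h
  obtain ⟨t, ht⟩ := hk
  have huk : u ^ k = 1 := by rw [ht, pow_mul, htot, one_pow]
  have hrk : ((r : ZMod (pp ^ 2))) ^ k = 1 := by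
    rw [← hu', ← Units.val_pow_eq_pow_val, huk, Units.val_one]
  have hfin : ((r ^ k : ℤ) : ZMod (pp ^ 2)) = ((1 : ℤ) : ZMod (pp ^ 2)) := by
    push_cast; exact hrk
  have h := (ZMod.intCast_eq_intCast_iff _ _ _).mp hfin
  rwa [show (((pp ^ 2 : ℕ) : ℤ)) = (pp : ℤ) ^ 2 by push_cast; ring] at h

/-- Paillier decryption correctness for g = 1+n:
    L(c^λ mod n²) · (L((1+n)^λ mod n²))⁻¹ ≡ m (mod n), where L(u) = (u-1)/n. -/
theorem paillier_decryption_correct (p q : ℕ) (hp : p.Prime) (hq : q.Prime)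
    (hpq : p ≠ q) (h1 : ¬ p ∣ (q - 1)) (h2 : ¬ q ∣ (p - 1))
    (r : ℤ) (hr : IsCoprime r ((p * q : ℕ) : ℤ)) (m : ℕ) (hm : m < p * q) :
    let n : ℤ := ((p * q : ℕ) : ℤ)
    let lam : ℕ := Nat.lcm (p - 1) (q - 1)
    let c : ℤ := (1 + n) ^ m * r ^ (p * q)
    ((((c ^ lam % n ^ 2) - 1) / n : ℤ) : ZMod (p * q)) *
      (((((1 + n) ^ lam % n ^ 2) - 1) / n : ℤ) : ZMod (p * q))⁻¹ =
        (m : ZMod (p * q)) := by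
  intro n lam c
  set N : ℕ := p * q with hN
  have hNpos : 0 < N := Nat.mul_pos hp.pos hq.pos
  have hNne : (N : ℤ) ≠ 0 := by exact_mod_cast hNpos.ne'
  -- lam is coprime to N
  have hlam_dvd : lam ∣ (p - 1) * (q - 1) :=
    Nat.lcm_dvd (Dvd.intro _ rfl) (Dvd.intro_left _ rfl)
  have hpp1 : ¬ p ∣ (p - 1) := by
    intro hd
    have h3 := Nat.le_of_dvd (by have := hp.two_le; omega) hd
    have h4 := hp.two_le
    omega
  have hqq1 : ¬ q ∣ (q - 1) := by
    intro hd
    have h3 := Nat.le_of_dvd (by have := hq.two_le; omega) hd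
    have h4 := hq.two_le
    omega
  have hplam : ¬ p ∣ lam := fun h => by
    rcases (hp.dvd_mul.mp (h.trans hlam_dvd)) with h' | h'
    · exact hpp1 h'
    · exact h1 h'
  have hqlam : ¬ q ∣ lam := fun h => by
    rcases (hq.dvd_mul.mp (h.trans hlam_dvd)) with h' | h'
    · exact h2 h'
    · exact hqq1 h'
  have hcop : Nat.Coprime lam N :=
    Nat.Coprime.symm (Nat.Coprime.mul ((hp.coprime_iff_not_dvd).mpr hplam)
      ((hq.coprime_iff_not_dvd).mpr hqlam))
  -- coprimality of r with p and q
  have hrp : IsCoprime r (p : ℤ) := hr.of_isCoprime_of_dvd_right (by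
    rw [hN]; push_cast; exact Dvd.intro _ rfl)
  have hrq : IsCoprime r (q : ℤ) := hr.of_isCoprime_of_dvd_right (by
    rw [hN]; push_cast; exact Dvd.intro_left _ rfl)
  -- r ^ (N * lam) ≡ 1 [ZMOD n^2]
  have hdvdp : p * (p - 1) ∣ N * lam := by
    have h1' : p * (p - 1) ∣ p * lam := mul_dvd_mul_left p (Nat.dvd_lcm_left _ _)
    exact h1'.trans ⟨q, by rw [hN]; ring⟩
  have hdvdq : q * (q - 1) ∣ N * lam := by
    have h1' : q * (q - 1) ∣ q * lam := mul_dvd_mul_left q (Nat.dvd_lcm_right _ _)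
    exact h1'.trans ⟨p, by rw [hN]; ring⟩
  have hrp2 : r ^ (N * lam) ≡ 1 [ZMOD (p : ℤ) ^ 2] := pow_modeq_one_sq p hp r hrp _ hdvdp
  have hrq2 : r ^ (N * lam) ≡ 1 [ZMOD (q : ℤ) ^ 2] := pow_modeq_one_sq q hq r hrq _ hdvdq
  have hcop_pq : (((p : ℤ) ^ 2).natAbs).Coprime (((q : ℤ) ^ 2).natAbs) := by
    simpa [Int.natAbs_pow] using Nat.Coprime.pow 2 2 ((Nat.coprime_primes hp hq).mpr hpq)
  have hr1 : r ^ (N * lam) ≡ 1 [ZMOD n ^ 2] := by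
    have h := (Int.modEq_and_modEq_iff_modEq_mul hcop_pq).mp ⟨hrp2, hrq2⟩
    have hn2 : (n : ℤ) ^ 2 = (p : ℤ) ^ 2 * (q : ℤ) ^ 2 := by
      show ((N : ℤ)) ^ 2 = _
      rw [hN]; push_cast; ring
    rwa [hn2]
  -- c ^ lam ≡ 1 + (m * lam) * n [ZMOD n^2]
  have hclam : c ^ lam ≡ 1 + ((m * lam : ℕ) : ℤ) * n [ZMOD n ^ 2] := by
    have hc : c ^ lam = (1 + n) ^ (m * lam) * r ^ (N * lam) := by
      show ((1 + n) ^ m * r ^ (p * q)) ^ lam = _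
      rw [mul_pow, ← pow_mul, ← pow_mul, hN]
    rw [hc]
    calc (1 + n) ^ (m * lam) * r ^ (N * lam)
        ≡ (1 + ((m * lam : ℕ) : ℤ) * n) * 1 [ZMOD n ^ 2] :=
          (one_add_pow_modeq n (m * lam)).mul hr1
      _ = 1 + ((m * lam : ℕ) : ℤ) * n := by ring
  have hglam : (1 + n) ^ lam ≡ 1 + (lam : ℤ) * n [ZMOD n ^ 2] := one_add_pow_modeq n lam
  -- extract the L values
  have hL1 : (((c ^ lam % n ^ 2 - 1) / n : ℤ) : ZMod N) = ((m * lam : ℕ) : ZMod N) :=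
    L_extract N hNne _ _ hclam
  have hL2 : ((((1 + n) ^ lam % n ^ 2 - 1) / n : ℤ) : ZMod N) = ((lam : ℕ) : ZMod N) :=
    L_extract N hNne _ _ hglam
  rw [hL1, hL2]
  push_cast
  rw [mul_assoc, ZMod.coe_mul_inv_eq_one lam hcop, mul_one]
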